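/- arXiv:1704.06143 — 2 statements merged into one kernel-verified Lean document; each statement's English description precedes it below -/
import Mathlib

section
/- Let V be a decoupling set for the d-dimensional Hilbert space H_s and let H_e be a separable Hilbert space. If U is a unitary operator on H_s ⊗ H_e that commutes with v ⊗ 1_{H_e} for every v ∈ V, then there exists a unitary W on H_e such that U = 1_{H_s} ⊗ W; indeed U = 1_{H_s} ⊗ (1/d) tr_{H_s}(U), where tr_{H_s} denotes the partial trace over H_s. -/
set_option synthInstance.maxHeartbeats 1000000
set_option maxHeartbeats 1000000

noncomputable section

open Finset

/-- `PiLp 2` over a finite index of complete spaces is complete. -/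
instance (priority := high) {ι : Type*} [Fintype ι] (α : ι → Type*)
    [∀ i, NormedAddCommGroup (α i)] [∀ i, CompleteSpace (α i)] :
    CompleteSpace (PiLp 2 α) :=
  inferInstance

variable {E : Type*} [NormedAddCommGroup E] [InnerProductSpace ℂ E] [CompleteSpace E]

/-- The operator `v ⊗ 1` on `ℂ^d ⊗ H_e ≅ (H_e)^d` for a `d × d` matrix `v`. -/
def matCLM {d : ℕ} (v : Matrix (Fin d) (Fin d) ℂ) :
    (PiLp 2 fun _ : Fin d => E) →L[ℂ] (PiLp 2 fun _ : Fin d => E) :=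
  ((PiLp.continuousLinearEquiv 2 ℂ _).symm.toContinuousLinearMap.comp
    ((ContinuousLinearMap.pi fun i => ∑ j, v i j • ContinuousLinearMap.proj j).comp
      (PiLp.continuousLinearEquiv 2 ℂ _).toContinuousLinearMap))

/-- The operator `1 ⊗ W` on `ℂ^d ⊗ H_e ≅ (H_e)^d`. -/
def idTensor {d : ℕ} (W : E →L[ℂ] E) :
    (PiLp 2 fun _ : Fin d => E) →L[ℂ] (PiLp 2 fun _ : Fin d => E) :=
  ((PiLp.continuousLinearEquiv 2 ℂ _).symm.toContinuousLinearMap.comp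
    ((ContinuousLinearMap.pi fun i => W.comp (ContinuousLinearMap.proj i)).comp
      (PiLp.continuousLinearEquiv 2 ℂ _).toContinuousLinearMap))

/-- Projection onto the `i`-th block of `ℂ^d ⊗ H_e ≅ (H_e)^d`. -/
def projCLM {d : ℕ} (i : Fin d) : (PiLp 2 fun _ : Fin d => E) →L[ℂ] E :=
  (ContinuousLinearMap.proj i).comp (PiLp.continuousLinearEquiv 2 ℂ _).toContinuousLinearMap

/-- Inclusion of the `i`-th block into `ℂ^d ⊗ H_e ≅ (H_e)^d`. -/
def inclCLM {d : ℕ} (i : Fin d) : E →L[ℂ] (PiLp 2 fun _ : Fin d => E) :=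
  (PiLp.continuousLinearEquiv 2 ℂ _).symm.toContinuousLinearMap.comp
    (ContinuousLinearMap.pi fun j => if j = i then ContinuousLinearMap.id ℂ E else 0)

/-- The (normalized by `(tr 1)⁻¹ = 1/d` below) partial trace over `ℂ^d` of an operator on
`ℂ^d ⊗ H_e`: the sum of its diagonal blocks. -/
def partialTrace {d : ℕ}
    (U : (PiLp 2 fun _ : Fin d => E) →L[ℂ] (PiLp 2 fun _ : Fin d => E)) : E →L[ℂ] E :=
  ∑ i : Fin d, (projCLM i).comp (U.comp (inclCLM i))

set_option linter.unusedSectionVars false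

section AuxLemmas

variable {d : ℕ}

local notation "⟪" x ", " y "⟫" => @inner ℂ _ _ x y

lemma piLp_sum_apply {ι : Type*} (s : Finset ι) (f : ι → PiLp 2 fun _ : Fin d => E)
    (k : Fin d) : (∑ j ∈ s, f j) k = ∑ j ∈ s, f j k := by
  classical
  induction s using Finset.cons_induction with
  | empty => rfl
  | cons a s ha ih => rw [Finset.sum_cons, Finset.sum_cons, ← ih]; rfl

lemma piLp_ext {x y : PiLp 2 fun _ : Fin d => E} (h : ∀ i, x i = y i) : x = y :=
  PiLp.ext h

lemma projCLM_apply (i : Fin d) (x : PiLp 2 fun _ : Fin d => E) :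
    projCLM i x = x i := rfl

lemma inclCLM_apply (i k : Fin d) (η : E) :
    inclCLM i η k = if k = i then η else 0 := by
  show (if k = i then ContinuousLinearMap.id ℂ E else 0) η = _
  split <;> rfl

lemma matCLM_apply (v : Matrix (Fin d) (Fin d) ℂ) (x : PiLp 2 fun _ : Fin d => E)
    (i : Fin d) : matCLM v x i = ∑ j, v i j • x j := by
  show (∑ j, v i j • ContinuousLinearMap.proj (R := ℂ) (φ := fun _ : Fin d => E) j) x = _
  simp [ContinuousLinearMap.sum_apply]

lemma idTensor_apply (W : E →L[ℂ] E) (x : PiLp 2 fun _ : Fin d => E) (i : Fin d) :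
    idTensor W x i = W (x i) := rfl

lemma partialTrace_apply (U : (PiLp 2 fun _ : Fin d => E) →L[ℂ] (PiLp 2 fun _ : Fin d => E))
    (η : E) : partialTrace U η = ∑ i : Fin d, (U (inclCLM i η)) i := by
  simp only [partialTrace, ContinuousLinearMap.sum_apply, ContinuousLinearMap.comp_apply]
  rfl

lemma sum_inclCLM (x : PiLp 2 fun _ : Fin d => E) : ∑ j, inclCLM j (x j) = x := by
  apply piLp_ext
  intro k
  rw [piLp_sum_apply]
  simp [inclCLM_apply]

lemma idTensor_mul (A B : E →L[ℂ] E) :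
    (idTensor (d := d) A) * idTensor B = idTensor (A * B) := by
  ext x
  rfl

lemma idTensor_one : idTensor (d := d) (1 : E →L[ℂ] E) = 1 := by
  ext x
  rfl

lemma idTensor_injective (hd : 0 < d) :
    Function.Injective (idTensor (d := d) (E := E)) := by
  intro A B h
  ext ξ
  have := congrArg (fun T => (T (inclCLM (⟨0, hd⟩ : Fin d) ξ)) (⟨0, hd⟩ : Fin d)) h
  simpa [idTensor_apply, inclCLM_apply] using this

lemma adjoint_idTensor (A : E →L[ℂ] E) :
    ContinuousLinearMap.adjoint (idTensor (d := d) A) =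
      idTensor (ContinuousLinearMap.adjoint A) := by
  symm
  rw [ContinuousLinearMap.eq_adjoint_iff]
  intro x y
  simp only [PiLp.inner_apply, idTensor_apply, ContinuousLinearMap.adjoint_inner_left]

end AuxLemmas

/-- Let `V` be a decoupling set for `ℂ^d` and `H_e` a separable Hilbert space.
If a unitary `U` on `ℂ^d ⊗ H_e` commutes with `v ⊗ 1` for every `v ∈ V`, then `U = 1 ⊗ W` for a
unitary `W` on `H_e`; indeed `U = 1 ⊗ (1/d) tr_{ℂ^d}(U)`. -/
theorem commutant_of_decoupling_set_is_one_tensor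
    [SecondCountableTopology E]
    (d : ℕ) (hd : 0 < d)
    (V : Subgroup (Matrix.unitaryGroup (Fin d) ℂ)) [Fintype V]
    (hVdec : ∀ x : Matrix (Fin d) (Fin d) ℂ,
      ((Fintype.card V : ℂ))⁻¹ •
          ∑ v : V, ((v : Matrix.unitaryGroup (Fin d) ℂ) : Matrix (Fin d) (Fin d) ℂ) * x *
            star ((v : Matrix.unitaryGroup (Fin d) ℂ) : Matrix (Fin d) (Fin d) ℂ)
        = (x.trace / d) • (1 : Matrix (Fin d) (Fin d) ℂ))
    (U : (PiLp 2 fun _ : Fin d => E) →L[ℂ] (PiLp 2 fun _ : Fin d => E))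
    (hU : U ∈ unitary ((PiLp 2 fun _ : Fin d => E) →L[ℂ] (PiLp 2 fun _ : Fin d => E)))
    (hcomm : ∀ v : V,
      (matCLM ((v : Matrix.unitaryGroup (Fin d) ℂ) : Matrix (Fin d) (Fin d) ℂ)).comp U
        = U.comp (matCLM ((v : Matrix.unitaryGroup (Fin d) ℂ) : Matrix (Fin d) (Fin d) ℂ))) :
    ∃ W : E →L[ℂ] E, W ∈ unitary (E →L[ℂ] E) ∧ U = idTensor W ∧
      W = (d : ℂ)⁻¹ • partialTrace U := by
  classical
  set W : E →L[ℂ] E := (d : ℂ)⁻¹ • partialTrace U with hWdef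
  have key : ∀ (j : Fin d) (η : E) (i : Fin d),
      (U (inclCLM j η)) i = (idTensor W (inclCLM j η)) i := by
    intro j η i
    apply ext_inner_left ℂ
    intro ξ
    set xm : Matrix (Fin d) (Fin d) ℂ :=
      fun k l => @inner ℂ _ _ ξ ((U (inclCLM l η)) k) with hxm
    have hvx : ∀ v : V,
        ((v : Matrix.unitaryGroup (Fin d) ℂ) : Matrix (Fin d) (Fin d) ℂ) * xm
          = xm * ((v : Matrix.unitaryGroup (Fin d) ℂ) : Matrix (Fin d) (Fin d) ℂ) := by
      intro v
      set vm := ((v : Matrix.unitaryGroup (Fin d) ℂ) : Matrix (Fin d) (Fin d) ℂ) with hvm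
      ext i' j'
      have hvec : matCLM (E := E) vm (inclCLM j' η) = ∑ l, vm l j' • inclCLM l η := by
        apply piLp_ext
        intro k
        rw [piLp_sum_apply, matCLM_apply]
        simp [inclCLM_apply]
      have hc : matCLM vm (U (inclCLM j' η)) = U (matCLM vm (inclCLM j' η)) :=
        DFunLike.congr_fun (hcomm v) (inclCLM j' η)
      calc (vm * xm) i' j'
          = ∑ k, vm i' k * xm k j' := Matrix.mul_apply
        _ = @inner ℂ _ _ ξ ((matCLM vm (U (inclCLM j' η))) i') := by
            rw [matCLM_apply, inner_sum]
            simp [inner_smul_right, hxm]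
        _ = @inner ℂ _ _ ξ ((U (matCLM vm (inclCLM j' η))) i') := by rw [hc]
        _ = ∑ l, xm i' l * vm l j' := by
            rw [hvec, map_sum, piLp_sum_apply, inner_sum]
            simp [map_smul, inner_smul_right, hxm, mul_comm]
        _ = (xm * vm) i' j' := (Matrix.mul_apply).symm
    have hfix : ∀ v : V,
        ((v : Matrix.unitaryGroup (Fin d) ℂ) : Matrix (Fin d) (Fin d) ℂ) * xm *
          star ((v : Matrix.unitaryGroup (Fin d) ℂ) : Matrix (Fin d) (Fin d) ℂ) = xm := by
      intro v
      rw [hvx v, Matrix.mul_assoc, (v : Matrix.unitaryGroup (Fin d) ℂ).prop.2, Matrix.mul_one]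
    have havg := hVdec xm
    rw [Finset.sum_congr rfl (fun v _ => hfix v), Finset.sum_const, Finset.card_univ,
      ← Nat.cast_smul_eq_nsmul ℂ, smul_smul,
      inv_mul_cancel₀ (Nat.cast_ne_zero.mpr (Fintype.card_ne_zero (α := V))), one_smul] at havg
    have htr : xm.trace = @inner ℂ _ _ ξ (partialTrace U η) := by
      rw [partialTrace_apply, inner_sum]
      rfl
    have hL : @inner ℂ _ _ ξ ((U (inclCLM j η)) i) = xm i j := rfl
    rw [hL, havg, idTensor_apply, inclCLM_apply]
    by_cases hij : i = j
    · subst hij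
      rw [if_pos rfl, hWdef]
      rw [ContinuousLinearMap.smul_apply, inner_smul_right, ← htr, Matrix.smul_apply,
        Matrix.one_apply_eq, smul_eq_mul, mul_one, div_eq_mul_inv, mul_comm]
    · rw [if_neg hij]
      rw [Matrix.smul_apply, Matrix.one_apply_ne hij, smul_eq_mul, mul_zero, map_zero,
        inner_zero_right]
  have hUW : U = idTensor W := by
    apply ContinuousLinearMap.ext
    intro x
    have hx := sum_inclCLM (E := E) (d := d) x
    calc U x = U (∑ j, inclCLM j (x j)) := by rw [hx]
      _ = ∑ j, U (inclCLM j (x j)) := map_sum _ _ _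
      _ = ∑ j, idTensor W (inclCLM j (x j)) :=
          Finset.sum_congr rfl fun j _ => piLp_ext fun i => key j (x j) i
      _ = idTensor W (∑ j, inclCLM j (x j)) := (map_sum _ _ _).symm
      _ = idTensor W x := by rw [hx]
  have hsU := Unitary.mem_iff.mp hU
  have h1 : idTensor (d := d) (star W * W) = idTensor (1 : E →L[ℂ] E) := by
    rw [← idTensor_mul, idTensor_one, ContinuousLinearMap.star_eq_adjoint,
      ← adjoint_idTensor, ← ContinuousLinearMap.star_eq_adjoint, ← hUW]
    exact hsU.1
  have h2 : idTensor (d := d) (W * star W) = idTensor (1 : E →L[ℂ] E) := by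
    rw [← idTensor_mul, idTensor_one, ContinuousLinearMap.star_eq_adjoint,
      ← adjoint_idTensor, ← ContinuousLinearMap.star_eq_adjoint, ← hUW]
    exact hsU.2
  exact ⟨W, Unitary.mem_iff.mpr ⟨idTensor_injective hd h1, idTensor_injective hd h2⟩,
    hUW, hWdef⟩
end
end

section
/- Let G and F be bounded self-adjoint operators on a Hilbert space with 0 ≤ G ≤ F ≤ 1 (in the operator order). Then for every n ≥ 1: (i) G ≤ (1 + (1−G))^{−1}; (ii) G^{2n} ≤ (1 + 2n(1−G))^{−1}; and (iii) (1 + 2n(1−G))^{−1} ≤ (1 + 2n(1−F))^{−1}. In particular G^{2n} ≤ (1 + 2n(1−F))^{−1}, so for every vector ξ, ‖G^n ξ‖² ≤ ⟨ξ, (1 + 2n(1−F))^{−1} ξ⟩. -/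
set_option maxHeartbeats 1000000
set_option synthInstance.maxHeartbeats 400000


noncomputable section

open ContinuousLinearMap

variable {H : Type*} [NormedAddCommGroup H] [InnerProductSpace ℂ H] [CompleteSpace H]

/-- The Loewner order on bounded operators: `A ≤ B` iff `B - A` is a positive operator. -/
def OpLE (A B : H →L[ℂ] H) : Prop := (B - A).IsPositive

private lemma aux_pow_ineq (m : ℕ) {t : ℝ} (h0 : 0 ≤ t) (h1 : t ≤ 1) :
    t ^ m * (1 + (m : ℝ) * (1 - t)) ≤ 1 := by
  induction m with
  | zero => simp
  | succ m ih =>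
    have hp : (0:ℝ) ≤ t ^ m := pow_nonneg h0 m
    have hm : (0:ℝ) ≤ (m : ℝ) := Nat.cast_nonneg m
    have key : t * (1 + ((m:ℝ)+1) * (1 - t)) ≤ 1 + (m:ℝ) * (1 - t) := by
      nlinarith [sq_nonneg (1 - t)]
    push_cast
    calc t ^ (m+1) * (1 + ((m:ℝ)+1) * (1 - t))
        = t ^ m * (t * (1 + ((m:ℝ)+1) * (1 - t))) := by ring
      _ ≤ t ^ m * (1 + (m:ℝ) * (1 - t)) := mul_le_mul_of_nonneg_left key hp
      _ ≤ 1 := ih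

private lemma isPositive_smul_real {T : H →L[ℂ] H} (hT : T.IsPositive) {c : ℝ} (hc : 0 ≤ c) :
    (c • T).IsPositive := by
  have hsa : IsSelfAdjoint (c • T) := by
    show star (c • T) = c • T
    rw [star_smul, hT.isSelfAdjoint.star_eq, star_trivial]
  refine isPositive_def'.mpr ⟨hsa, fun x => ?_⟩
  have h := hT.re_inner_nonneg_left x
  rw [ContinuousLinearMap.reApplyInnerSelf_apply]
  have e : (inner ℂ ((c • T) x) x : ℂ) = ((c : ℂ)) * (inner ℂ (T x) x : ℂ) := by
    rw [ContinuousLinearMap.smul_apply,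
      show (c • T x) = ((c : ℂ)) • T x from (Complex.coe_smul c (T x)).symm,
      inner_smul_left]
    simp
  rw [e]
  simpa using mul_nonneg hc h

/-- Let `G`, `F` be bounded self-adjoint operators with `0 ≤ G ≤ F ≤ 1`.
Then for every `n ≥ 1`, writing `J` for the inverse of `1 + (1−G)`, `G₂` for the inverse of
`1 + 2n(1−G)` and `F₂` for the inverse of `1 + 2n(1−F)`, one has
(i) `G ≤ J`, (ii) `G^(2n) ≤ G₂`, (iii) `G₂ ≤ F₂`; in particular `G^(2n) ≤ F₂` and for every
vector `ξ`, `‖G^n ξ‖² ≤ ⟨ξ, F₂ ξ⟩`. -/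
theorem kato_operator_inequalities
    (G F : H →L[ℂ] H) (hGsa : IsSelfAdjoint G) (hFsa : IsSelfAdjoint F)
    (hG0 : G.IsPositive) (hGF : OpLE G F) (hF1 : OpLE F 1)
    (n : ℕ) (hn : 1 ≤ n)
    (J G₂ F₂ : H →L[ℂ] H)
    (hJ : J * (1 + (1 - G)) = 1 ∧ (1 + (1 - G)) * J = 1)
    (hG₂ : G₂ * (1 + (2 * n : ℝ) • (1 - G)) = 1 ∧ (1 + (2 * n : ℝ) • (1 - G)) * G₂ = 1)
    (hF₂ : F₂ * (1 + (2 * n : ℝ) • (1 - F)) = 1 ∧ (1 + (2 * n : ℝ) • (1 - F)) * F₂ = 1) :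
    OpLE G J ∧ OpLE (G ^ (2 * n)) G₂ ∧ OpLE G₂ F₂ ∧ OpLE (G ^ (2 * n)) F₂ ∧
      ∀ ξ : H, ‖(G ^ n) ξ‖ ^ 2 ≤ (inner ℂ ξ (F₂ ξ) : ℂ).re := by
  obtain ⟨hJl, hJr⟩ := hJ
  obtain ⟨hG₂l, hG₂r⟩ := hG₂
  obtain ⟨hF₂l, hF₂r⟩ := hF₂
  have hG0' : (0 : H →L[ℂ] H) ≤ G := (nonneg_iff_isPositive G).mpr hG0
  have hGF' : G ≤ F := (le_def G F).mpr hGF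
  have hF1' : F ≤ (1 : H →L[ℂ] H) := (le_def F 1).mpr hF1
  have hG1' : G ≤ 1 := hGF'.trans hF1'
  have h1pos : (0 : H →L[ℂ] H) ≤ 1 := (le_def 0 1).mpr (by simpa using isPositive_one)
  have hspec0 : ∀ x ∈ spectrum ℝ G, 0 ≤ x :=
    (StarOrderedRing.nonneg_iff_spectrum_nonneg (R := ℝ) G hGsa).mp hG0'
  have hspec1 : ∀ x ∈ spectrum ℝ G, x ≤ 1 := (CFC.le_one_iff (R := ℝ) G hGsa).mp hG1'
  -- part (i)
  have hne : ∀ x ∈ spectrum ℝ G, (2 - x) ≠ 0 := fun x hx => by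
    have := hspec1 x hx; intro h; linarith
  have contJ : ContinuousOn (fun t : ℝ => (2 - t)⁻¹) (spectrum ℝ G) :=
    ContinuousOn.inv₀ (by fun_prop) hne
  have hTJ : (1 : H →L[ℂ] H) + (1 - G) = cfc (fun t : ℝ => 2 - t) G := by
    rw [cfc_sub (fun _ : ℝ => (2:ℝ)) (fun t : ℝ => t) G (by fun_prop) (by fun_prop),
      cfc_id' ℝ G hGsa, cfc_const 2 G hGsa]
    rw [show (algebraMap ℝ (H →L[ℂ] H)) 2 = 2 from map_ofNat _ 2]
    rw [show (2 : H →L[ℂ] H) = 1 + 1 from (one_add_one_eq_two).symm]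
    abel
  have hmulJ : cfc (fun t : ℝ => 2 - t) G * cfc (fun t : ℝ => (2 - t)⁻¹) G = 1 := by
    rw [← cfc_mul _ _ G (by fun_prop) contJ]
    rw [cfc_congr (g := fun _ : ℝ => (1:ℝ)) (fun x hx => mul_inv_cancel₀ (hne x hx)),
      cfc_const_one ℝ G hGsa]
  have hJeq : J = cfc (fun t : ℝ => (2 - t)⁻¹) G := by
    calc J = J * (cfc (fun t : ℝ => 2 - t) G * cfc (fun t : ℝ => (2 - t)⁻¹) G) := by
            rw [hmulJ, mul_one]
      _ = (J * (1 + (1 - G))) * cfc (fun t : ℝ => (2 - t)⁻¹) G := by rw [hTJ, mul_assoc]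
      _ = cfc (fun t : ℝ => (2 - t)⁻¹) G := by rw [hJl, one_mul]
  have hi : G ≤ J := by
    conv_lhs => rw [← cfc_id' ℝ G hGsa]
    rw [hJeq]
    refine cfc_mono (fun x hx => ?_) (by fun_prop) contJ
    have h0 := hspec0 x hx
    have h1 := hspec1 x hx
    have h2 : (0:ℝ) < 2 - x := by linarith
    rw [inv_eq_one_div, le_div_iff₀ h2]
    nlinarith [sq_nonneg (1 - x)]
  -- part (ii)
  have hc : (0:ℝ) ≤ 2 * n := by positivity
  have hpos2 : ∀ x ∈ spectrum ℝ G, (0:ℝ) < 1 + (2 * n : ℝ) * (1 - x) := fun x hx => by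
    have h1 := hspec1 x hx
    nlinarith
  have cont2 : ContinuousOn (fun t : ℝ => (1 + (2 * n : ℝ) * (1 - t))⁻¹) (spectrum ℝ G) :=
    ContinuousOn.inv₀ (by fun_prop) (fun x hx => ne_of_gt (hpos2 x hx))
  have hT2 : (1 : H →L[ℂ] H) + (2 * n : ℝ) • (1 - G)
      = cfc (fun t : ℝ => 1 + (2 * n : ℝ) * (1 - t)) G := by
    have e1 : cfc (fun t : ℝ => 1 - t) G = 1 - G := by
      rw [cfc_sub (fun _ : ℝ => (1:ℝ)) (fun t : ℝ => t) G (by fun_prop) (by fun_prop),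
        cfc_id' ℝ G hGsa, cfc_const_one ℝ G hGsa]
    rw [cfc_add (a := G) (fun _ : ℝ => (1:ℝ)) (fun t : ℝ => (2 * n : ℝ) * (1 - t))
        (by fun_prop) (by fun_prop),
      cfc_const_one ℝ G hGsa, cfc_const_mul _ _ G (by fun_prop), e1]
  have hmul2 : cfc (fun t : ℝ => 1 + (2 * n : ℝ) * (1 - t)) G
      * cfc (fun t : ℝ => (1 + (2 * n : ℝ) * (1 - t))⁻¹) G = 1 := by
    rw [← cfc_mul _ _ G (by fun_prop) cont2]
    rw [cfc_congr (g := fun _ : ℝ => (1:ℝ))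
        (fun x hx => mul_inv_cancel₀ (ne_of_gt (hpos2 x hx))),
      cfc_const_one ℝ G hGsa]
  have hG₂eq : G₂ = cfc (fun t : ℝ => (1 + (2 * n : ℝ) * (1 - t))⁻¹) G := by
    calc G₂ = G₂ * (cfc (fun t : ℝ => 1 + (2 * n : ℝ) * (1 - t)) G
          * cfc (fun t : ℝ => (1 + (2 * n : ℝ) * (1 - t))⁻¹) G) := by rw [hmul2, mul_one]
      _ = (G₂ * (1 + (2 * n : ℝ) • (1 - G)))
          * cfc (fun t : ℝ => (1 + (2 * n : ℝ) * (1 - t))⁻¹) G := by rw [hT2, mul_assoc]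
      _ = cfc (fun t : ℝ => (1 + (2 * n : ℝ) * (1 - t))⁻¹) G := by rw [hG₂l, one_mul]
  have hii : G ^ (2 * n) ≤ G₂ := by
    conv_lhs => rw [← cfc_pow_id (R := ℝ) G (2 * n) hGsa]
    rw [hG₂eq]
    refine cfc_mono (fun x hx => ?_) (by fun_prop) cont2
    have h0 := hspec0 x hx
    have h1 := hspec1 x hx
    have hd := hpos2 x hx
    rw [inv_eq_one_div, le_div_iff₀ hd]
    have := aux_pow_ineq (2 * n) h0 h1
    push_cast at this
    linarith
  -- part (iii)
  have h1Fpos : (0 : H →L[ℂ] H) ≤ 1 - F := (le_def 0 (1 - F)).mpr (by rw [sub_zero]; exact hF1)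
  have hFGpos : (0 : H →L[ℂ] H) ≤ F - G := (le_def 0 (F - G)).mpr (by rw [sub_zero]; exact hGF)
  have hTF0 : (0 : H →L[ℂ] H) ≤ 1 + (2 * n : ℝ) • (1 - F) := by
    refine add_nonneg h1pos ?_
    exact (le_def _ _).mpr (by simpa using isPositive_smul_real (hF1 : (1 - F).IsPositive) hc)
  have hFG : (1 : H →L[ℂ] H) + (2 * n : ℝ) • (1 - F) ≤ 1 + (2 * n : ℝ) • (1 - G) := by
    have h2 : (2 * n : ℝ) • (1 - F) ≤ (2 * n : ℝ) • (1 - G) := by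
      rw [← sub_nonneg, ← smul_sub]
      have h3 : (1 - G) - (1 - F) = F - G := by abel
      rw [h3]
      exact (le_def _ _).mpr (by simpa using isPositive_smul_real (hGF : (F - G).IsPositive) hc)
    exact add_le_add_right h2 1
  let uG : (H →L[ℂ] H)ˣ := ⟨1 + (2 * n : ℝ) • (1 - G), G₂, hG₂r, hG₂l⟩
  let uF : (H →L[ℂ] H)ˣ := ⟨1 + (2 * n : ℝ) • (1 - F), F₂, hF₂r, hF₂l⟩
  have hiii : G₂ ≤ F₂ := CStarAlgebra.inv_le_inv (a := uF) (b := uG) hTF0 hFG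
  have hiv : G ^ (2 * n) ≤ F₂ := hii.trans hiii
  refine ⟨(le_def _ _).mp hi, (le_def _ _).mp hii, (le_def _ _).mp hiii, (le_def _ _).mp hiv, ?_⟩
  intro ξ
  have hposv : (F₂ - G ^ (2 * n)).IsPositive := (le_def _ _).mp hiv
  have hpow : (inner ℂ ξ ((G ^ (2 * n)) ξ) : ℂ) = inner ℂ ((G ^ n) ξ) ((G ^ n) ξ) := by
    rw [two_mul, pow_add, ContinuousLinearMap.mul_apply, ← ContinuousLinearMap.adjoint_inner_left,
      ← ContinuousLinearMap.star_eq_adjoint, (hGsa.pow n).star_eq]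
  have key := hposv.re_inner_nonneg_right ξ
  rw [ContinuousLinearMap.sub_apply, inner_sub_right, map_sub, hpow,
    inner_self_eq_norm_sq, sub_nonneg] at key
  simpa using key
end
end
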